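/- Let (X, 𝓑, μ) be a finite measure space and τ : X → X a measurable map such that μ∘τ^{-1} ≪ μ, with Radon–Nikodym derivative φ = d(μ∘τ^{-1})/dμ assumed μ-essentially bounded. Suppose E₁, …, E_k are pairwise disjoint measurable sets whose union is τ(X), and σ₁, …, σ_k : X → X are measurable maps such that σ_i(τ(x)) = x for every x ∈ X with τ(x) ∈ E_i. Then for all f₁, f₂ ∈ L²(μ) (real-valued): ∫_X f₁ · (f₂∘τ) dμ = ∑_{i=1}^k ∫_{E_i} (f₁∘σ_i) · f₂ · φ dμ. In other words, the adjoint of the composition operator C_τ : f ↦ f∘τ on L²(μ) is given on E_i by (C_τ*f)(x) = φ(x) f(σ_i(x)). -/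

import Mathlib

open MeasureTheory ENNReal

/-- Product of two `L²` functions is integrable. -/
lemma memL2_mul_integrable {X : Type*} [MeasurableSpace X] {μ : Measure X} {f g : X → ℝ}
    (hf : MemLp f 2 μ) (hg : MemLp g 2 μ) : Integrable (fun x => f x * g x) μ := by
  have h : MemLp (f • g) 1 μ := hg.smul hf
  exact memLp_one_iff_integrable.mp h

/-- Adjoint formula for a composition operator associated to a
finite-type measurable endomorphism `τ` with `μ ∘ τ⁻¹ ≪ μ` and essentially bounded
Radon–Nikodym derivative `φ = d(μ∘τ⁻¹)/dμ`: for `f₁, f₂ ∈ L²(μ)`,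
`∫ f₁ · (f₂ ∘ τ) dμ = ∑ᵢ ∫_{Eᵢ} (f₁ ∘ σᵢ) · f₂ · φ dμ`. -/
theorem stmt1 {X : Type*} [MeasurableSpace X] (μ : Measure X) [IsFiniteMeasure μ]
    (τ : X → X) (hτ : Measurable τ) (hac : μ.map τ ≪ μ)
    (φ : X → ℝ) (hφ : φ = fun x => ((μ.map τ).rnDeriv μ x).toReal)
    (hbd : ∃ C : ℝ, ∀ᵐ x ∂μ, φ x ≤ C)
    (k : ℕ) (E : Fin k → Set X) (hE : ∀ i, MeasurableSet (E i))
    (hdisj : Pairwise (Function.onFun Disjoint E))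
    (hcover : (⋃ i, E i) = τ '' Set.univ)
    (σ : Fin k → X → X) (hσm : ∀ i, Measurable (σ i))
    (hσ : ∀ i x, τ x ∈ E i → σ i (τ x) = x)
    (f₁ f₂ : X → ℝ) (hf₁ : MemLp f₁ 2 μ) (hf₂ : MemLp f₂ 2 μ) :
    ∫ x, f₁ x * f₂ (τ x) ∂μ = ∑ i, ∫ x in E i, f₁ (σ i x) * f₂ x * φ x ∂μ := by
  subst hφ
  haveI : IsFiniteMeasure (μ.map τ) := Measure.isFiniteMeasure_map μ τ
  set ρ : X → ℝ≥0∞ := (μ.map τ).rnDeriv μ with hρdef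
  have hρm : Measurable ρ := Measure.measurable_rnDeriv _ _
  obtain ⟨C, hC⟩ := hbd
  -- a.e. bound on the density
  have hρC : ∀ᵐ x ∂μ, ρ x ≤ ENNReal.ofReal C := by
    filter_upwards [hC, Measure.rnDeriv_lt_top (μ.map τ) μ] with x h1 h2
    exact le_trans (le_of_eq (ENNReal.ofReal_toReal h2.ne).symm)
      (ENNReal.ofReal_le_ofReal h1)
  -- the pushforward is dominated by a multiple of μ
  have hle : μ.map τ ≤ (ENNReal.ofReal C) • μ := by
    refine Measure.le_iff.mpr fun S hS => ?_
    rw [← Measure.withDensity_rnDeriv_eq (μ.map τ) μ hac, withDensity_apply _ hS,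
      Measure.smul_apply, smul_eq_mul]
    calc ∫⁻ x in S, ρ x ∂μ ≤ ∫⁻ _ in S, ENNReal.ofReal C ∂μ :=
          lintegral_mono_ae (ae_restrict_of_ae hρC)
      _ = ENNReal.ofReal C * μ S := by rw [setLIntegral_const]
  have hmem : ∀ f : X → ℝ, MemLp f 2 μ → MemLp f 2 (μ.map τ) := fun f hf =>
    MemLp.mono_measure hle (hf.smul_measure ENNReal.ofReal_ne_top)
  -- strongly measurable representatives
  set f₁' := hf₁.1.mk f₁ with hf₁'def
  set f₂' := hf₂.1.mk f₂ with hf₂'def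
  have hsm₁ : StronglyMeasurable f₁' := hf₁.1.stronglyMeasurable_mk
  have hsm₂ : StronglyMeasurable f₂' := hf₂.1.stronglyMeasurable_mk
  have heq₁ : f₁ =ᵐ[μ] f₁' := hf₁.1.ae_eq_mk
  have heq₂ : f₂ =ᵐ[μ] f₂' := hf₂.1.ae_eq_mk
  have hf₁' : MemLp f₁' 2 μ := hf₁.ae_eq heq₁
  have hf₂' : MemLp f₂' 2 μ := hf₂.ae_eq heq₂
  have hmem₂τ : MemLp (f₂' ∘ τ) 2 μ := (hmem f₂' hf₂').comp_of_map hτ.aemeasurable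
  have hint : Integrable (fun x => f₁' x * f₂' (τ x)) μ :=
    memL2_mul_integrable hf₁' hmem₂τ
  -- the pieces
  set F : Fin k → X → ℝ := fun i => (E i).indicator (fun y => f₁' (σ i y) * f₂' y) with hFdef
  have hFm : ∀ i, StronglyMeasurable (F i) := fun i =>
    (((hsm₁.measurable.comp (hσm i)).mul hsm₂.measurable).indicator (hE i)).stronglyMeasurable
  have hFτ : ∀ i x, F i (τ x) = (τ ⁻¹' E i).indicator (fun x => f₁' x * f₂' (τ x)) x := by
    intro i x
    by_cases h : τ x ∈ E i
    · simp only [hFdef, Set.indicator_of_mem h, Set.indicator_of_mem (Set.mem_preimage.mpr h),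
        hσ i x h]
    · simp only [hFdef, Set.indicator_of_notMem h,
        Set.indicator_of_notMem (fun hh => h (Set.mem_preimage.mp hh))]
  have hsum : ∀ x, f₁' x * f₂' (τ x) = ∑ i, F i (τ x) := by
    intro x
    have hx : τ x ∈ ⋃ i, E i := by
      rw [hcover]; exact ⟨x, trivial, rfl⟩
    obtain ⟨i, hi⟩ := Set.mem_iUnion.mp hx
    rw [Finset.sum_eq_single i]
    · simp only [hFdef, Set.indicator_of_mem hi, hσ i x hi]
    · intro j _ hj
      have : τ x ∉ E j := fun hxj =>
        Set.disjoint_left.mp (hdisj hj) hxj hi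
      simp only [hFdef, Set.indicator_of_notMem this]
    · intro h; exact absurd (Finset.mem_univ i) h
  have hIF : ∀ i, Integrable (fun x => F i (τ x)) μ := by
    intro i
    have : (fun x => F i (τ x)) = (τ ⁻¹' E i).indicator (fun x => f₁' x * f₂' (τ x)) := by
      funext x; exact hFτ i x
    rw [this]
    exact hint.indicator (hτ (hE i))
  -- main computation
  have hcomp : (fun x => f₂ (τ x)) =ᵐ[μ] fun x => f₂' (τ x) :=
    ae_eq_comp hτ.aemeasurable (hac.ae_eq heq₂)
  calc ∫ x, f₁ x * f₂ (τ x) ∂μ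
      = ∫ x, f₁' x * f₂' (τ x) ∂μ := by
        refine integral_congr_ae ?_
        filter_upwards [heq₁, hcomp] with x h1 h2
        rw [h1, h2]
    _ = ∫ x, ∑ i, F i (τ x) ∂μ := by
        exact integral_congr_ae (Filter.Eventually.of_forall fun x => hsum x)
    _ = ∑ i, ∫ x, F i (τ x) ∂μ := integral_finset_sum _ fun i _ => hIF i
    _ = ∑ i, ∫ y, F i y ∂(μ.map τ) := by
        refine Finset.sum_congr rfl fun i _ => ?_
        rw [integral_map hτ.aemeasurable ((hFm i).aestronglyMeasurable)]
    _ = ∑ i, ∫ x, (ρ x).toReal • F i x ∂μ := by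
        refine Finset.sum_congr rfl fun i _ => ?_
        rw [hρdef]
        exact (integral_rnDeriv_smul hac).symm
    _ = ∑ i, ∫ x in E i, f₁' (σ i x) * f₂' x * (ρ x).toReal ∂μ := by
        refine Finset.sum_congr rfl fun i _ => ?_
        rw [← integral_indicator (hE i)]
        refine integral_congr_ae (Filter.Eventually.of_forall fun x => ?_)
        by_cases h : x ∈ E i
        · simp only [hFdef, Set.indicator_of_mem h, smul_eq_mul]; ring
        · simp only [hFdef, Set.indicator_of_notMem h, smul_zero]
    _ = ∑ i, ∫ x in E i, f₁ (σ i x) * f₂ x * (ρ x).toReal ∂μ := by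
        refine Finset.sum_congr rfl fun i _ => ?_
        refine setIntegral_congr_ae (hE i) ?_
        -- the exceptional set where f₁ ∘ σ i differs has zero density
        set N := toMeasurable μ {x | f₁ x ≠ f₁' x} with hNdef
        have hNm : MeasurableSet N := measurableSet_toMeasurable _ _
        have hNnull : μ N = 0 := by
          rw [hNdef, measure_toMeasurable]
          exact heq₁
        have hTm : MeasurableSet (E i ∩ σ i ⁻¹' N) := (hE i).inter ((hσm i) hNm)
        have hTnull : (μ.map τ) (E i ∩ σ i ⁻¹' N) = 0 := by
          rw [Measure.map_apply hτ hTm]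
          refine measure_mono_null ?_ hNnull
          intro y hy
          have h1 : τ y ∈ E i := hy.1
          have h2 : σ i (τ y) ∈ N := hy.2
          rwa [hσ i y h1] at h2
        have hρ0 : ∀ᵐ x ∂μ, x ∈ E i ∩ σ i ⁻¹' N → ρ x = 0 := by
          rw [← setLIntegral_eq_zero_iff hTm hρm, hρdef,
            ← withDensity_apply _ hTm, Measure.withDensity_rnDeriv_eq (μ.map τ) μ hac]
          exact hTnull
        filter_upwards [hρ0, heq₂] with x hx h2
        intro hxE
        by_cases hN : σ i x ∈ N
        · have h0 : ρ x = 0 := hx ⟨hxE, hN⟩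
          simp [h0]
        · have h1 : f₁ (σ i x) = f₁' (σ i x) := by
            by_contra h
            exact hN (subset_toMeasurable _ _ h)
          rw [h1, h2]
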